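/- Let f be injective holomorphic on an open set containing the closure of a convex open set S ⊂ ℂ, and suppose |f'(z)|/|f'(z')| ≤ D for all z, z' in the closure of S. Then for any disk of diameter d contained in S, its image under f contains a disk of diameter at least (1/D)·|f'(c)|·d, where c is any point of the closure of S; and the image of S is contained in a set of diameter at most D·|f'(c)|·diam(S). -/

import Mathlib

open Metric Set Filter Topology

/-- Distortion estimates for images of disks under a univalent map of bounded distortion:
if `f` is injective holomorphic on an open set containing the closure of a bounded convex
open set `S`, with `|f'(z)|/|f'(z')| ≤ D` on `cl S`, then the image of any disk of diameter
`d` contained in `S` contains a disk of diameter at least `(1/D)·|f'(c)|·d`, and the image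
of `S` has diameter at most `D·|f'(c)|·diam S`, for any `c` in the closure of `S`. -/
theorem distortion_image_disk (S : Set ℂ) (hSopen : IsOpen S) (hSconv : Convex ℝ S)
    (hSbdd : Bornology.IsBounded S) (U : Set ℂ) (hU : IsOpen U) (hSU : closure S ⊆ U)
    (f : ℂ → ℂ) (hf : DifferentiableOn ℂ f U) (hinj : Set.InjOn f U)
    (D : ℝ) (hD : 1 ≤ D)
    (hdist : ∀ z ∈ closure S, ∀ z' ∈ closure S, ‖deriv f z‖ ≤ D * ‖deriv f z'‖)
    (c : ℂ) (hc : c ∈ closure S) :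
    (∀ (c₀ : ℂ) (d : ℝ), 0 < d → Metric.ball c₀ (d/2) ⊆ S →
      ∃ c₁ : ℂ, Metric.ball c₁ ((1/D) * ‖deriv f c‖ * d / 2) ⊆ f '' Metric.ball c₀ (d/2)) ∧
    Metric.diam (f '' S) ≤ D * ‖deriv f c‖ * Metric.diam S := by
  have hD0 : (0:ℝ) < D := lt_of_lt_of_le one_pos hD
  have han : ∀ z ∈ U, HasStrictDerivAt f (deriv f z) z := by
    intro z hz
    obtain ⟨p, hp⟩ := hf.analyticAt (hU.mem_nhds hz)
    rw [hp.deriv]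
    exact hp.hasStrictDerivAt
  constructor
  · intro c₀ d hd hball
    set r := d / 2 with hr_def
    have hr : 0 < r := by positivity
    by_cases hfc : ‖deriv f c‖ = 0
    · refine ⟨0, ?_⟩
      rw [hfc]
      simp
    set m : ℝ := 1/D * ‖deriv f c‖ with hm_def
    have hm0 : 0 < m := by
      have : 0 < ‖deriv f c‖ := lt_of_le_of_ne (norm_nonneg _) (Ne.symm hfc)
      positivity
    have hm : ∀ z ∈ closure S, m ≤ ‖deriv f z‖ := by
      intro z hz
      have h := hdist c hc z hz
      rw [hm_def, one_div, inv_mul_le_iff₀ hD0]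
      exact h
    have hc₀S : c₀ ∈ S := hball (mem_ball_self hr)
    have hBU : ball c₀ r ⊆ U := fun x hx => hSU (subset_closure (hball hx))
    have hBS : ball c₀ r ⊆ closure S := fun x hx => subset_closure (hball hx)
    have hne : ∀ z ∈ closure S, deriv f z ≠ 0 := by
      intro z hz
      have := lt_of_lt_of_le hm0 (hm z hz)
      exact norm_pos_iff.mp this
    set g : ℂ → ℂ := Function.invFunOn f U with hg_def
    have hgf : ∀ z ∈ U, g (f z) = z := fun z hz => hinj.leftInvOn_invFunOn hz
    have key : ∀ w ∈ f '' ball c₀ r,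
        HasDerivAt g (deriv f (g w))⁻¹ w ∧ g w ∈ ball c₀ r := by
      rintro w ⟨z, hz, rfl⟩
      have hzU : z ∈ U := hBU hz
      have hgz : g (f z) = z := hgf z hzU
      have hst := han z hzU
      have hne' : deriv f z ≠ 0 := hne z (hBS hz)
      rw [hgz]
      refine ⟨?_, hz⟩
      set E := hst.hasStrictFDerivAt_equiv hne' with hE
      have htd : Tendsto (E.localInverse f _ z) (𝓝 (f z)) (𝓝 z) := E.localInverse_tendsto
      have hmemU : ∀ᶠ y in 𝓝 (f z), E.localInverse f _ z y ∈ U :=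
        htd.eventually (hU.eventually_mem hzU)
      have heq : g =ᶠ[𝓝 (f z)] E.localInverse f _ z := by
        filter_upwards [E.eventually_right_inverse, hmemU] with y h1 h2
        calc g y = g (f (E.localInverse f _ z y)) := by rw [h1]
        _ = E.localInverse f _ z y := hgf _ h2
      have hd' : HasStrictDerivAt (E.localInverse f _ z) (deriv f z)⁻¹ (f z) :=
        hst.to_localInverse hne'
      exact hd'.hasDerivAt.congr_of_eventuallyEq heq
    have hopen : IsOpen (f '' ball c₀ r) := by
      rw [isOpen_iff_mem_nhds]
      rintro w ⟨z, hz, rfl⟩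
      have hst := han z (hBU hz)
      have hmap := hst.map_nhds_eq (hne z (hBS hz))
      rw [← hmap]
      exact image_mem_map (isOpen_ball.mem_nhds hz)
    have hbddim : Bornology.IsBounded (f '' ball c₀ r) := by
      have hcb : closedBall c₀ r ⊆ U := by
        rw [← closure_ball c₀ hr.ne']
        exact (closure_mono hball).trans ((closure_mono subset_closure).trans (by rw [closure_closure]; exact hSU))
      have hK : IsCompact (f '' closedBall c₀ r) :=
        (isCompact_closedBall c₀ r).image_of_continuousOn (hf.continuousOn.mono hcb)
      exact hK.isBounded.subset (image_mono ball_subset_closedBall)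
    have hcompl : (f '' ball c₀ r)ᶜ.Nonempty := by
      obtain ⟨R, hR⟩ := hbddim.subset_closedBall 0
      refine ⟨((|R|+1 : ℝ) : ℂ), fun hmem => ?_⟩
      have h1 := hR hmem
      rw [mem_closedBall, dist_zero_right] at h1
      rw [Complex.norm_real, Real.norm_eq_abs, abs_of_nonneg (by positivity)] at h1
      linarith [le_abs_self R]
    set ρ := infDist (f c₀) (f '' ball c₀ r)ᶜ with hρ_def
    have hρpos : 0 < ρ := by
      rw [← (hopen.isClosed_compl.notMem_iff_infDist_pos hcompl)]
      simp only [mem_compl_iff, not_not]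
      exact mem_image_of_mem f (mem_ball_self hr)
    have hsub : ball (f c₀) ρ ⊆ f '' ball c₀ r := by
      intro w hw
      by_contra hww
      have h1 : ρ ≤ dist (f c₀) w := infDist_le_dist_of_mem (mem_compl hww)
      rw [mem_ball, dist_comm] at hw
      exact absurd h1 (not_le.mpr hw)
    have hMVI : ∀ x ∈ ball (f c₀) ρ, ∀ y ∈ ball (f c₀) ρ, ‖g y - g x‖ ≤ m⁻¹ * ‖y - x‖ := by
      intro x hx y hy
      refine Convex.norm_image_sub_le_of_norm_hasDerivWithin_le
        (f' := fun w => (deriv f (g w))⁻¹)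
        (fun w hw => ((key w (hsub hw)).1).hasDerivWithinAt)
        (fun w hw => ?_) (convex_ball _ _) hx hy
      have hgw := (key w (hsub hw)).2
      rw [norm_inv]
      exact inv_anti₀ hm0 (hm _ (hBS hgw))
    have hρmr : m * r ≤ ρ := by
      by_contra hlt
      push_neg at hlt
      obtain ⟨w, hwmem, hwd⟩ := hopen.isClosed_compl.exists_infDist_eq_dist hcompl (f c₀)
      have hwdist : dist (f c₀) w = ρ := hwd.symm
      set K := closedBall c₀ (ρ / m) with hK_def
      have hKB : K ⊆ ball c₀ r := by
        intro x hx
        rw [mem_closedBall] at hx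
        rw [mem_ball]
        calc dist x c₀ ≤ ρ / m := hx
        _ < r := by rw [div_lt_iff₀ hm0]; linarith [mul_comm m r]
      have hKclosed : IsClosed (f '' K) :=
        ((isCompact_closedBall _ _).image_of_continuousOn
          (hf.continuousOn.mono ((hKB.trans hBU)))).isClosed
      set γ : ℝ → ℂ := fun t => f c₀ + (t : ℂ) * (w - f c₀) with hγ_def
      have hγmem : ∀ t ∈ Ico (0:ℝ) 1, γ t ∈ f '' K := by
        intro t ht
        have hnorm : ‖γ t - f c₀‖ = t * ρ := by
          rw [hγ_def]
          simp only [add_sub_cancel_left]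
          rw [norm_mul, Complex.norm_real]
          rw [Real.norm_eq_abs, abs_of_nonneg ht.1]
          rw [← dist_eq_norm, dist_comm, hwdist]
        have htb : γ t ∈ ball (f c₀) ρ := by
          rw [mem_ball, dist_eq_norm, hnorm]
          nlinarith [ht.2, hρpos]
        have himg := hsub htb
        have hfg : f (g (γ t)) = γ t := by
          obtain ⟨z, hz, hfz⟩ := himg
          exact Function.invFunOn_eq ⟨z, hBU hz, hfz⟩
        have hgK : g (γ t) ∈ K := by
          have h1 := hMVI (f c₀) (mem_ball_self hρpos) (γ t) htb
          rw [hgf c₀ (hBU (mem_ball_self hr)), hnorm] at h1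
          rw [hK_def, mem_closedBall, dist_eq_norm]
          calc ‖g (γ t) - c₀‖ ≤ m⁻¹ * (t * ρ) := h1
          _ ≤ ρ / m := by
            rw [div_eq_inv_mul]
            have ht1 : t * ρ ≤ ρ := by nlinarith [ht.1, ht.2, hρpos]
            exact mul_le_mul_of_nonneg_left ht1 (inv_pos.mpr hm0).le
        exact ⟨g (γ t), hgK, hfg⟩
      have hnebot : (𝓝[Ico (0:ℝ) 1] 1).NeBot := by
        rw [← mem_closure_iff_nhdsWithin_neBot, closure_Ico (by norm_num : (0:ℝ) ≠ 1)]
        exact right_mem_Icc.2 zero_le_one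
      have hγ1 : γ 1 = w := by rw [hγ_def]; simp
      have hγcont : Tendsto γ (𝓝[Ico (0:ℝ) 1] 1) (𝓝 (γ 1)) := by
        apply Tendsto.mono_left _ nhdsWithin_le_nhds
        exact ((continuous_const.add ((Complex.continuous_ofReal).mul continuous_const)).tendsto 1)
      have hwcl : w ∈ closure (f '' K) := by
        rw [← hγ1]
        exact mem_closure_of_tendsto hγcont
          (eventually_mem_nhdsWithin.mono fun t ht => hγmem t ht)
      rw [hKclosed.closure_eq] at hwcl
      exact hwmem (image_mono hKB hwcl)
    refine ⟨f c₀, ?_⟩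
    have heq : (1/D) * ‖deriv f c‖ * d / 2 = m * r := by
      rw [hm_def, hr_def]; ring
    rw [heq]
    exact (ball_subset_ball hρmr).trans hsub
  · have hK : ∀ z ∈ S, ‖deriv f z‖ ≤ D * ‖deriv f c‖ :=
      fun z hz => hdist z (subset_closure hz) c hc
    have hlip : ∀ x ∈ S, ∀ y ∈ S, ‖f y - f x‖ ≤ D * ‖deriv f c‖ * ‖y - x‖ := by
      intro x hx y hy
      refine Convex.norm_image_sub_le_of_norm_hasDerivWithin_le (f' := deriv f)
        (fun z hz => ((hf.differentiableAt
          (hU.mem_nhds (hSU (subset_closure hz)))).hasDerivAt).hasDerivWithinAt)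
        (fun z hz => hK z hz) hSconv hx hy
    apply Metric.diam_le_of_forall_dist_le (by positivity)
    rintro x ⟨a, ha, rfl⟩ y ⟨b, hb, rfl⟩
    rw [dist_eq_norm]
    calc ‖f a - f b‖ ≤ D * ‖deriv f c‖ * ‖a - b‖ := hlip b hb a ha
    _ ≤ D * ‖deriv f c‖ * Metric.diam S := by
      apply mul_le_mul_of_nonneg_left _ (by positivity)
      rw [← dist_eq_norm]
      exact Metric.dist_le_diam_of_mem hSbdd ha hb
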